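/- Let S = ℂ[x_0, …, x_n], let d ≥ 4 be an integer, and let I ⊆ S be a proper homogeneous ideal whose Hilbert function satisfies the symmetry h_I(k) = h_I(3d − 5 − k) for all integers k with 0 ≤ k ≤ 3d − 5, and satisfies h_I(d−1) ≥ 2d − 1. Then Σ_{k=0}^{3d−5} h_I(k) > 3(d−1)^2. -/

import Mathlib

open MvPolynomial

/-- An ideal of `ℂ[x_0,…,x_n]` is homogeneous if it contains all homogeneous
components of its elements. -/
def IsHomogeneousIdeal {n : ℕ} (I : Ideal (MvPolynomial (Fin (n + 1)) ℂ)) : Prop :=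
  ∀ f ∈ I, ∀ k : ℕ, homogeneousComponent k f ∈ I

/-- The Hilbert function of an ideal `I ⊆ ℂ[x_0,…,x_n]`:
`h_I(k) = dim S_k - dim (I ∩ S_k)`. -/
noncomputable def hilbertFn {n : ℕ} (I : Ideal (MvPolynomial (Fin (n + 1)) ℂ))
    (k : ℕ) : ℕ :=
  Module.finrank ℂ (homogeneousSubmodule (Fin (n + 1)) ℂ k) -
    Module.finrank ℂ
      (Submodule.restrictScalars ℂ I ⊓ homogeneousSubmodule (Fin (n + 1)) ℂ k :
        Submodule ℂ (MvPolynomial (Fin (n + 1)) ℂ))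

open Module

namespace SumHilbertAux

variable {n : ℕ}




/-- Homogeneous degree-`j` polynomials in the variables belonging to `T`. -/
noncomputable def degSet (T : Finset (Fin (n+1))) (j : ℕ) :
    Submodule ℂ (MvPolynomial (Fin (n+1)) ℂ) :=
  restrictSupport ℂ {d | ↑d.support ⊆ (T : Set (Fin (n+1))) ∧ d.degree = j}

lemma mem_degSet {T : Finset (Fin (n+1))} {j : ℕ} {p : MvPolynomial (Fin (n+1)) ℂ} :
    p ∈ degSet T j ↔ ∀ d ∈ p.support, ↑d.support ⊆ (T : Set (Fin (n+1))) ∧ d.degree = j := by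
  rw [degSet, restrictSupport, AddMonoidAlgebra.mem_supported]
  constructor
  · intro h d hd
    have := h (by exact_mod_cast hd)
    exact this
  · intro h d hd
    simp only [Finset.mem_coe] at hd
    exact h d hd

lemma degSet_mono {T T' : Finset (Fin (n+1))} (h : T ⊆ T') (j : ℕ) :
    degSet (n := n) T j ≤ degSet T' j := by
  apply restrictSupport_mono
  rintro d ⟨h1, h2⟩
  exact ⟨h1.trans (by exact_mod_cast h), h2⟩

lemma degSet_le_restrict (T : Finset (Fin (n+1))) (j : ℕ) :
    degSet (n := n) T j ≤ restrictTotalDegree (Fin (n+1)) ℂ j := by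
  apply restrictSupport_mono
  rintro d ⟨_, h2⟩
  simp only [Set.mem_setOf_eq]
  rw [← h2]
  rfl

instance degSet_fd (T : Finset (Fin (n+1))) (j : ℕ) :
    FiniteDimensional ℂ (degSet (n := n) T j) :=
  Submodule.finiteDimensional_of_le (degSet_le_restrict T j)

lemma monomial_mem_degSet {T : Finset (Fin (n+1))} {j : ℕ} {d : Fin (n+1) →₀ ℕ}
    {c : ℂ} (h1 : ↑d.support ⊆ (T : Set (Fin (n+1)))) (h2 : d.degree = j) :
    (monomial d c : MvPolynomial (Fin (n+1)) ℂ) ∈ degSet T j := by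
  rw [mem_degSet]
  intro e he
  have := support_monomial_subset he
  simp only [Finset.mem_singleton] at this
  subst this
  exact ⟨h1, h2⟩





lemma deg_add (a b : Fin (n+1) →₀ ℕ) : (a + b).degree = a.degree + b.degree := by
  simp [Finsupp.degree_eq_weight_one, map_add]

lemma deg_single_one (x : Fin (n+1)) : (Finsupp.single x 1).degree = 1 := by
  classical
  exact Finsupp.degree_single x 1

lemma X_mul_monomial' (x : Fin (n+1)) (d : Fin (n+1) →₀ ℕ) (c : ℂ) :
    X x * monomial d c = monomial (d + Finsupp.single x 1) c := by
  rw [X, monomial_mul, one_mul, add_comm d]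

/-- if `d x ≠ 0` then `monomial d c` is `X x` times a monomial. -/
lemma monomial_eq_X_mul {x : Fin (n+1)} {d : Fin (n+1) →₀ ℕ} (h : d x ≠ 0) (c : ℂ) :
    monomial d c = X x * monomial (d - Finsupp.single x 1) c := by
  rw [X_mul_monomial']
  congr 1
  rw [tsub_add_cancel_of_le]
  rw [Finsupp.single_le_iff]
  omega





/-- The algebra map killing the variable `x`. -/
noncomputable def killX (x : Fin (n+1)) :
    MvPolynomial (Fin (n+1)) ℂ →ₐ[ℂ] MvPolynomial (Fin (n+1)) ℂ :=
  aeval (fun i => if i = x then 0 else X i)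

lemma killX_monomial (x : Fin (n+1)) (d : Fin (n+1) →₀ ℕ) (c : ℂ) :
    killX (n := n) x (monomial d c) = if d x = 0 then monomial d c else 0 := by
  classical
  rw [killX, aeval_monomial]
  by_cases hdx : d x = 0
  · rw [if_pos hdx]
    have : (d.prod fun i k => (if i = x then (0 : MvPolynomial (Fin (n+1)) ℂ) else X i) ^ k)
        = d.prod fun i k => (X i) ^ k := by
      apply Finsupp.prod_congr
      intro i hi
      have : i ≠ x := by
        intro h; subst h; exact (Finsupp.mem_support_iff.mp hi) hdx
      rw [if_neg this]
    rw [this, algebraMap_eq, ← monomial_eq]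
  · rw [if_neg hdx]
    have hx : x ∈ d.support := Finsupp.mem_support_iff.mpr hdx
    have : (d.prod fun i k => (if i = x then (0 : MvPolynomial (Fin (n+1)) ℂ) else X i) ^ k) = 0 := by
      rw [Finsupp.prod]
      apply Finset.prod_eq_zero hx
      rw [if_pos rfl, zero_pow hdx]
    rw [this, mul_zero]

lemma coeff_killX (x : Fin (n+1)) (p : MvPolynomial (Fin (n+1)) ℂ) (e : Fin (n+1) →₀ ℕ) :
    coeff e (killX (n := n) x p) = if e x = 0 then coeff e p else 0 := by
  classical
  conv_lhs => rw [as_sum p, map_sum]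
  rw [coeff_sum]
  rw [Finset.sum_congr rfl (g := fun d => if d = e then (if e x = 0 then coeff e p else 0) else 0)]
  · rw [Finset.sum_ite_eq' p.support e _]
    by_cases he : e ∈ p.support
    · simp [he]
    · simp [he, MvPolynomial.notMem_support_iff.mp he]
  · intro d hd
    rw [killX_monomial]
    by_cases hdx : d x = 0
    · rw [if_pos hdx, coeff_monomial]
      by_cases hde : d = e
      · subst hde; simp [hdx]
      · simp [hde]
    · rw [if_neg hdx, coeff_zero]
      by_cases hde : d = e
      · subst hde; simp [hdx]
      · simp [hde]



/-- multiplication by `X x` as a linear map -/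
noncomputable def mulX (x : Fin (n+1)) :
    MvPolynomial (Fin (n+1)) ℂ →ₗ[ℂ] MvPolynomial (Fin (n+1)) ℂ :=
  LinearMap.mulLeft ℂ (X x)

lemma mulX_apply (x : Fin (n+1)) (p : MvPolynomial (Fin (n+1)) ℂ) :
    mulX x p = X x * p := rfl

lemma mulX_injective (x : Fin (n+1)) : Function.Injective (mulX (n := n) x) := by
  intro a b h
  simp only [mulX_apply] at h
  exact mul_left_cancel₀ (X_ne_zero x) h

lemma finrank_map_mulX (x : Fin (n+1)) (Q : Submodule ℂ (MvPolynomial (Fin (n+1)) ℂ)) :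
    Module.finrank ℂ (Q.map (mulX x)) = Module.finrank ℂ Q :=
  (LinearEquiv.finrank_eq (Submodule.equivMapOfInjective _ (mulX_injective x) Q)).symm

lemma support_decomp {x : Fin (n+1)} {d : Fin (n+1) →₀ ℕ} (hdx : d x ≠ 0) :
    d = (d - Finsupp.single x 1) + Finsupp.single x 1 := by
  rw [tsub_add_cancel_of_le]
  rw [Finsupp.single_le_iff]
  omega

lemma deg_sub_single {x : Fin (n+1)} {d : Fin (n+1) →₀ ℕ} (hdx : d x ≠ 0) :
    (d - Finsupp.single x 1).degree + 1 = d.degree := by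
  conv_rhs => rw [support_decomp hdx]
  rw [deg_add, deg_single_one]

lemma mulX_mem_degSet {T : Finset (Fin (n+1))} {x : Fin (n+1)} (hx : x ∈ T) {j : ℕ}
    {p : MvPolynomial (Fin (n+1)) ℂ} (hp : p ∈ degSet T j) :
    X x * p ∈ degSet T (j+1) := by
  classical
  rw [mem_degSet] at hp ⊢
  intro d hd
  have hco : coeff d (X x * p) ≠ 0 := MvPolynomial.mem_support_iff.mp hd
  rw [coeff_X_mul'] at hco
  by_cases hdx : x ∈ d.support
  · rw [if_pos hdx] at hco
    have hdx' : d x ≠ 0 := Finsupp.mem_support_iff.mp hdx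
    have he : (d - Finsupp.single x 1) ∈ p.support := MvPolynomial.mem_support_iff.mpr hco
    obtain ⟨hsupp, hdeg⟩ := hp _ he
    constructor
    · intro i hi
      rcases em (i = x) with rfl | hne
      · exact_mod_cast hx
      · have hsub : d.support ⊆ (d - Finsupp.single x 1).support ∪ (Finsupp.single x 1).support := by
          conv_lhs => rw [support_decomp hdx']
          exact Finsupp.support_add
        have hi' : i ∈ d.support := by exact_mod_cast hi
        rcases Finset.mem_union.mp (hsub hi') with h | h
        · exact hsupp (by exact_mod_cast h)
        · exfalso
          have := Finsupp.support_single_subset h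
          simp only [Finset.mem_singleton] at this
          exact hne this
    · rw [← deg_sub_single hdx', hdeg]
  · rw [if_neg hdx] at hco
    exact absurd rfl hco

lemma map_mulX_degSet_le {T : Finset (Fin (n+1))} {x : Fin (n+1)} (hx : x ∈ T) (j : ℕ) :
    (degSet T j).map (mulX x) ≤ degSet (n := n) T (j+1) := by
  rintro p ⟨q, hq, rfl⟩
  exact mulX_mem_degSet hx hq

/-- a polynomial all of whose monomials contain `x` is `X x` times something. -/
lemma xdvd_mem_map {T : Finset (Fin (n+1))} {x : Fin (n+1)} {j : ℕ}
    {q : MvPolynomial (Fin (n+1)) ℂ} (hq : q ∈ degSet T (j+1))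
    (hall : ∀ d ∈ q.support, d x ≠ 0) :
    q ∈ (degSet (n := n) T j).map (mulX x) := by
  classical
  rw [as_sum q]
  apply Submodule.sum_mem
  intro d hd
  rw [mem_degSet] at hq
  obtain ⟨hsupp, hdeg⟩ := hq d hd
  have hdx := hall d hd
  refine ⟨monomial (d - Finsupp.single x 1) (coeff d q), ?_, ?_⟩
  · apply monomial_mem_degSet
    · exact fun i hi => hsupp (by exact_mod_cast Finsupp.support_tsub (by exact_mod_cast hi))
    · have := deg_sub_single hdx
      omega
  · rw [mulX_apply, ← monomial_eq_X_mul hdx]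

/-- x-free polynomials are disjoint from multiples of `X x`. -/
lemma disjoint_erase_map {T : Finset (Fin (n+1))} {x : Fin (n+1)} {j : ℕ}
    (Q : Submodule ℂ (MvPolynomial (Fin (n+1)) ℂ)) :
    degSet (n := n) (T.erase x) j ⊓ Q.map (mulX x) = ⊥ := by
  classical
  rw [eq_bot_iff]
  intro p hp
  rw [Submodule.mem_inf] at hp
  obtain ⟨hp1, hp2⟩ := hp
  rw [Submodule.mem_map] at hp2
  obtain ⟨q, hq, rfl⟩ := hp2
  simp only [Submodule.mem_bot]
  by_contra hne
  have hq0 : q ≠ 0 := by rintro rfl; simp [map_zero] at hne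
  obtain ⟨d, hd⟩ := (MvPolynomial.support_nonempty.mpr hq0)
  have hmem : (d + Finsupp.single x 1) ∈ (mulX x q).support := by
    rw [MvPolynomial.mem_support_iff, mulX_apply, add_comm d (Finsupp.single x 1), coeff_X_mul]
    exact MvPolynomial.mem_support_iff.mp hd
  rw [mem_degSet] at hp1
  obtain ⟨hsupp, _⟩ := hp1 _ hmem
  have hxs : x ∈ (d + Finsupp.single x 1).support := by
    rw [Finsupp.mem_support_iff]
    simp [Finsupp.single_apply]
  have := hsupp hxs
  exact (Finset.mem_erase.mp (by exact_mod_cast this)).1 rfl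


lemma degSet_decomp {T : Finset (Fin (n+1))} {x : Fin (n+1)} (hx : x ∈ T) (J : ℕ) :
    degSet (n := n) T (J+1)
      = degSet (T.erase x) (J+1) ⊔ (degSet T J).map (mulX x) := by
  classical
  apply le_antisymm
  · intro p hp
    rw [as_sum p]
    apply Submodule.sum_mem
    intro d hd
    rw [mem_degSet] at hp
    obtain ⟨hsupp, hdeg⟩ := hp d hd
    by_cases hdx : d x = 0
    · apply Submodule.mem_sup_left
      apply monomial_mem_degSet _ hdeg
      intro i hi
      have hiT := hsupp hi
      have : i ≠ x := by
        rintro rfl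
        exact (Finsupp.mem_support_iff.mp (by exact_mod_cast hi)) hdx
      exact_mod_cast Finset.mem_erase.mpr ⟨this, by exact_mod_cast hiT⟩
    · apply Submodule.mem_sup_right
      refine ⟨monomial (d - Finsupp.single x 1) (coeff d p), ?_, ?_⟩
      · apply monomial_mem_degSet
        · exact fun i hi => hsupp (by exact_mod_cast Finsupp.support_tsub (by exact_mod_cast hi))
        · have := deg_sub_single hdx; omega
      · rw [mulX_apply, ← monomial_eq_X_mul hdx]
  · apply sup_le
    · exact degSet_mono (Finset.erase_subset x T) (J+1)
    · exact map_mulX_degSet_le hx J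

lemma killX_mem_degSet {T : Finset (Fin (n+1))} {x : Fin (n+1)} {j : ℕ}
    {p : MvPolynomial (Fin (n+1)) ℂ} (hp : p ∈ degSet T j) :
    killX x p ∈ degSet (n := n) (T.erase x) j := by
  rw [mem_degSet] at hp ⊢
  intro d hd
  have hco := MvPolynomial.mem_support_iff.mp hd
  rw [coeff_killX] at hco
  by_cases hdx : d x = 0
  · rw [if_pos hdx] at hco
    obtain ⟨hsupp, hdeg⟩ := hp d (MvPolynomial.mem_support_iff.mpr hco)
    refine ⟨?_, hdeg⟩
    intro i hi
    have : i ≠ x := by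
      rintro rfl
      exact (Finsupp.mem_support_iff.mp (by exact_mod_cast hi)) hdx
    exact_mod_cast Finset.mem_erase.mpr ⟨this, by exact_mod_cast hsupp hi⟩
  · rw [if_neg hdx] at hco
    exact absurd rfl hco

lemma sub_killX_mem {T : Finset (Fin (n+1))} {x : Fin (n+1)} {j : ℕ}
    {p : MvPolynomial (Fin (n+1)) ℂ} (hp : p ∈ degSet T (j+1)) :
    p - killX x p ∈ (degSet (n := n) T j).map (mulX x) := by
  have hk : killX x p ∈ degSet T (j+1) :=
    degSet_mono (Finset.erase_subset x T) (j+1) (killX_mem_degSet hp)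
  apply xdvd_mem_map (Submodule.sub_mem _ hp hk)
  intro d hd
  have hco := MvPolynomial.mem_support_iff.mp hd
  intro hdx
  apply hco
  rw [coeff_sub, coeff_killX, if_pos hdx, sub_self]

section Systems

variable {T : Finset (Fin (n+1))} (x : Fin (n+1))
variable (W : ℕ → Submodule ℂ (MvPolynomial (Fin (n+1)) ℂ))

/-- image of the system under killing x -/
noncomputable def Wpi (j : ℕ) : Submodule ℂ (MvPolynomial (Fin (n+1)) ℂ) :=
  (W j).map (killX x).toLinearMap

/-- colon system -/
noncomputable def Wco (T : Finset (Fin (n+1))) (j : ℕ) :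
    Submodule ℂ (MvPolynomial (Fin (n+1)) ℂ) :=
  ((W (j+1)).comap (mulX x)) ⊓ degSet T j

variable {x W}

lemma Wpi_le {j : ℕ} (hWle : ∀ j, W j ≤ degSet (n := n) T j) :
    Wpi x W j ≤ degSet (T.erase x) j := by
  rintro p ⟨q, hq, rfl⟩
  exact killX_mem_degSet (hWle j hq)

lemma Wpi_sys (hWsys : ∀ i ∈ T, ∀ j, ∀ f ∈ W j, X i * f ∈ W (j+1)) :
    ∀ i ∈ T.erase x, ∀ j, ∀ f ∈ Wpi (n := n) x W j, X i * f ∈ Wpi x W (j+1) := by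
  rintro i hi j f ⟨q, hq, rfl⟩
  obtain ⟨hix, hiT⟩ := Finset.mem_erase.mp hi
  refine ⟨X i * q, hWsys i hiT j q hq, ?_⟩
  have : killX (n := n) x (X i) = X i := by
    rw [killX, aeval_X, if_neg hix]
  show (killX x).toLinearMap (X i * q) = _
  rw [AlgHom.toLinearMap_apply, map_mul, this]
  rfl

lemma Wco_le (j : ℕ) : Wco (n := n) x W T j ≤ degSet T j := inf_le_right

lemma Wco_sys (hx : x ∈ T) (hWsys : ∀ i ∈ T, ∀ j, ∀ f ∈ W j, X i * f ∈ W (j+1)) :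
    ∀ i ∈ T, ∀ j, ∀ f ∈ Wco (n := n) x W T j, X i * f ∈ Wco x W T (j+1) := by
  rintro i hi j f ⟨hf1, hf2⟩
  constructor
  · show X x * (X i * f) ∈ W (j+2)
    rw [mul_left_comm]
    exact hWsys i hi (j+1) _ hf1
  · exact mulX_mem_degSet hi hf2

lemma W_le_Wco (hx : x ∈ T) (hWle : ∀ j, W j ≤ degSet (n := n) T j)
    (hWsys : ∀ i ∈ T, ∀ j, ∀ f ∈ W j, X i * f ∈ W (j+1)) (j : ℕ) :
    W j ≤ Wco x W T j := by
  intro f hf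
  exact ⟨hWsys x hx j f hf, hWle j hf⟩

lemma sup_eq_Wpi_sup {J : ℕ} (hWle : ∀ j, W j ≤ degSet (n := n) T j) :
    W (J+1) ⊔ (degSet T J).map (mulX x)
      = Wpi x W (J+1) ⊔ (degSet T J).map (mulX x) := by
  apply le_antisymm
  · apply sup_le _ le_sup_right
    intro w hw
    have h1 : killX x w ∈ Wpi x W (J+1) := ⟨w, hw, rfl⟩
    have h2 : w - killX x w ∈ (degSet T J).map (mulX x) := sub_killX_mem (hWle _ hw)
    have : w = killX x w + (w - killX x w) := by ring
    rw [this]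
    exact Submodule.add_mem _ (Submodule.mem_sup_left h1) (Submodule.mem_sup_right h2)
  · apply sup_le _ le_sup_right
    rintro p ⟨w, hw, rfl⟩
    have h2 : w - killX x w ∈ (degSet T J).map (mulX x) := sub_killX_mem (hWle _ hw)
    have : (killX x).toLinearMap w = w - (w - killX x w) := by
      simp [AlgHom.toLinearMap_apply]
    rw [this]
    exact Submodule.sub_mem _ (Submodule.mem_sup_left hw) (Submodule.mem_sup_right h2)

lemma inf_eq_Wco_map {J : ℕ} (hWle : ∀ j, W j ≤ degSet (n := n) T j) :
    W (J+1) ⊓ (degSet T J).map (mulX x) = (Wco x W T J).map (mulX x) := by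
  apply le_antisymm
  · intro p hp
    rw [Submodule.mem_inf] at hp
    obtain ⟨hp1, hp2⟩ := hp
    rw [Submodule.mem_map] at hp2
    obtain ⟨q, hq, rfl⟩ := hp2
    exact ⟨q, ⟨hp1, hq⟩, rfl⟩
  · rintro p ⟨q, ⟨hq1, hq2⟩, rfl⟩
    exact ⟨hq1, ⟨q, hq2, rfl⟩⟩

lemma zero_prop (hWsys : ∀ i ∈ T, ∀ j, ∀ f ∈ W j, X i * f ∈ W (j+1)) {j : ℕ}
    (h : degSet (n := n) T j ≤ W j) : degSet (n := n) T (j+1) ≤ W (j+1) := by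
  intro p hp
  rw [as_sum p]
  apply Submodule.sum_mem
  intro d hd
  rw [mem_degSet] at hp
  obtain ⟨hsupp, hdeg⟩ := hp d hd
  have hd0 : d ≠ 0 := by
    rintro rfl
    rw [map_zero] at hdeg
    omega
  obtain ⟨i, hi⟩ := Finsupp.support_nonempty_iff.mpr hd0
  have hiT : i ∈ T := by exact_mod_cast hsupp (by exact_mod_cast hi)
  have hdx : d i ≠ 0 := Finsupp.mem_support_iff.mp hi
  rw [monomial_eq_X_mul hdx]
  apply hWsys i hiT j
  apply h
  apply monomial_mem_degSet
  · exact fun a ha => hsupp (by exact_mod_cast Finsupp.support_tsub (by exact_mod_cast ha))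
  · have := deg_sub_single hdx; omega

end Systems

/-- codimension of `W j` inside the degree-`j` piece -/
noncomputable def cdim (T : Finset (Fin (n+1)))
    (W : ℕ → Submodule ℂ (MvPolynomial (Fin (n+1)) ℂ)) (j : ℕ) : ℕ :=
  finrank ℂ (degSet T j) - finrank ℂ (W j)

lemma degSet_empty (j : ℕ) : degSet (n := n) (∅ : Finset (Fin (n+1))) (j+1) = ⊥ := by
  rw [eq_bot_iff]
  intro p hp
  rw [mem_degSet] at hp
  simp only [Submodule.mem_bot]
  by_contra hne
  obtain ⟨d, hd⟩ := MvPolynomial.support_nonempty.mpr hne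
  obtain ⟨hsupp, hdeg⟩ := hp d hd
  have : d.support = ∅ := by
    rw [← Finset.subset_empty]
    intro i hi
    exact absurd (hsupp (by exact_mod_cast hi)) (by simp)
  have : d = 0 := Finsupp.support_eq_empty.mp this
  subst this
  rw [map_zero] at hdeg
  omega

section DimId

variable {T : Finset (Fin (n+1))} {x : Fin (n+1)}
variable {W : ℕ → Submodule ℂ (MvPolynomial (Fin (n+1)) ℂ)}

lemma finrank_degSet_decomp (hx : x ∈ T) (J : ℕ) :
    finrank ℂ (degSet (n := n) T (J+1))
      = finrank ℂ (degSet (T.erase x) (J+1)) + finrank ℂ (degSet T J) := by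
  haveI : FiniteDimensional ℂ ((degSet (n := n) T J).map (mulX x)) :=
    Submodule.finiteDimensional_of_le (map_mulX_degSet_le hx J)
  have hsup := Submodule.finrank_sup_add_finrank_inf_eq
    (degSet (n := n) (T.erase x) (J+1)) ((degSet T J).map (mulX x))
  rw [disjoint_erase_map, ← degSet_decomp hx J, finrank_bot, add_zero,
    finrank_map_mulX] at hsup
  exact hsup

lemma finrank_W_decomp (hx : x ∈ T) (hWle : ∀ j, W j ≤ degSet (n := n) T j) (J : ℕ) :
    finrank ℂ (W (J+1))
      = finrank ℂ (Wpi x W (J+1)) + finrank ℂ (Wco x W T J) := by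
  set M := (degSet (n := n) T J).map (mulX x) with hM
  haveI : FiniteDimensional ℂ M := Submodule.finiteDimensional_of_le (map_mulX_degSet_le hx J)
  haveI : FiniteDimensional ℂ (W (J+1)) := Submodule.finiteDimensional_of_le (hWle (J+1))
  haveI : FiniteDimensional ℂ (Wpi (n := n) x W (J+1)) :=
    Submodule.finiteDimensional_of_le (Wpi_le hWle)
  have h1 := Submodule.finrank_sup_add_finrank_inf_eq (W (J+1)) M
  rw [hM, sup_eq_Wpi_sup hWle, inf_eq_Wco_map hWle, ← hM] at h1
  have h2 := Submodule.finrank_sup_add_finrank_inf_eq (Wpi (n := n) x W (J+1)) M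
  have hWpiM : Wpi (n := n) x W (J+1) ⊓ M = ⊥ := by
    rw [eq_bot_iff, ← disjoint_erase_map (T := T) (x := x) (j := J+1) (degSet T J)]
    exact inf_le_inf_right M (Wpi_le hWle)
  rw [hWpiM, finrank_bot, add_zero] at h2
  rw [finrank_map_mulX] at h1
  rw [h2] at h1
  omega

lemma cdim_decomp (hx : x ∈ T) (hWle : ∀ j, W j ≤ degSet (n := n) T j) (J : ℕ) :
    cdim T W (J+1)
      = cdim (T.erase x) (Wpi x W) (J+1) + cdim T (Wco x W T) J := by
  have hB1 := finrank_degSet_decomp (n := n) hx J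
  have hB2 := finrank_W_decomp hx hWle J
  have hb1 : finrank ℂ (Wpi (n := n) x W (J+1)) ≤ finrank ℂ (degSet (T.erase x) (J+1)) :=
    Submodule.finrank_mono (Wpi_le hWle)
  have hb2 : finrank ℂ (Wco (n := n) x W T J) ≤ finrank ℂ (degSet T J) :=
    Submodule.finrank_mono (Wco_le J)
  unfold cdim
  omega

lemma cdim_zero_prop (hWle : ∀ j, W j ≤ degSet (n := n) T j)
    (hWsys : ∀ i ∈ T, ∀ j, ∀ f ∈ W j, X i * f ∈ W (j+1)) {j : ℕ}
    (h : cdim T W j = 0) : cdim T W (j+1) = 0 := by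
  haveI : FiniteDimensional ℂ (W j) := Submodule.finiteDimensional_of_le (hWle j)
  haveI : FiniteDimensional ℂ (W (j+1)) := Submodule.finiteDimensional_of_le (hWle (j+1))
  unfold cdim at h ⊢
  have h1 : finrank ℂ (degSet (n := n) T j) ≤ finrank ℂ (W j) := by omega
  have heq : W j = degSet T j := Submodule.eq_of_le_of_finrank_le (hWle j) h1
  have hle : degSet (n := n) T (j+1) ≤ W (j+1) := zero_prop hWsys heq.ge
  have := Submodule.finrank_mono (M := MvPolynomial (Fin (n+1)) ℂ) hle
  omega

lemma cdim_mono_W {W' : ℕ → Submodule ℂ (MvPolynomial (Fin (n+1)) ℂ)}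
    (hWle : ∀ j, W j ≤ degSet (n := n) T j)
    (hle : ∀ j, W j ≤ W' j) (j : ℕ) (h' : W' j ≤ degSet T j) :
    cdim T W' j ≤ cdim T W j := by
  haveI : FiniteDimensional ℂ (W' j) := Submodule.finiteDimensional_of_le h'
  have := Submodule.finrank_mono (M := MvPolynomial (Fin (n+1)) ℂ) (hle j)
  unfold cdim
  omega

end DimId

/-- The key Macaulay-type growth bounds, by induction on the number of variables
and the degree. -/
lemma key : ∀ (N : ℕ) (T : Finset (Fin (n+1))), T.card ≤ N →
    ∀ (k : ℕ) (W : ℕ → Submodule ℂ (MvPolynomial (Fin (n+1)) ℂ)),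
    (∀ j, W j ≤ degSet T j) →
    (∀ i ∈ T, ∀ j, ∀ f ∈ W j, X i * f ∈ W (j+1)) →
    (cdim T W k ≤ k → cdim T W (k+1) ≤ cdim T W k) ∧
    (cdim T W k ≤ 2*k → 1 ≤ k → cdim T W (k+1) ≤ cdim T W k + 1) := by
  intro N
  induction N with
  | zero =>
    intro T hT k W hWle hWsys
    have hTe : T = ∅ := Finset.card_eq_zero.mp (Nat.le_zero.mp hT)
    subst hTe
    have hz : cdim (n := n) ∅ W (k+1) = 0 := by
      unfold cdim
      rw [degSet_empty k]
      have : W (k+1) ≤ ⊥ := by rw [← degSet_empty k]; exact hWle (k+1)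
      simp [finrank_bot]
    constructor
    · intro _; omega
    · intro _ _; omega
  | succ N ihN =>
    intro T hT k W
    induction k generalizing W with
    | zero =>
      intro hWle hWsys
      constructor
      · intro h0
        have h1 : cdim T W (0+1) = 0 := cdim_zero_prop hWle hWsys (by omega)
        omega
      · intro _ h; omega
    | succ k ih =>
      intro hWle hWsys
      -- empty case
      by_cases hTe : T = ∅
      · subst hTe
        have hz : cdim (n := n) ∅ W (k+1+1) = 0 := by
          unfold cdim
          rw [degSet_empty (k+1)]
          have : W (k+1+1) ≤ ⊥ := by rw [← degSet_empty (k+1)]; exact hWle (k+1+1)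
          simp [finrank_bot]
        exact ⟨fun _ => by omega, fun _ _ => by omega⟩
      obtain ⟨x, hx⟩ := Finset.nonempty_iff_ne_empty.mpr hTe
      -- subsystems
      have hcard : (T.erase x).card ≤ N := by
        have := Finset.card_erase_of_mem hx
        omega
      have hWpile : ∀ j, Wpi x W j ≤ degSet (T.erase x) j := fun j => Wpi_le hWle
      have hWpisys := Wpi_sys (x := x) hWsys
      have hWcole : ∀ j, Wco x W T j ≤ degSet T j := fun j => Wco_le j
      have hWcosys := Wco_sys hx hWsys
      -- identities
      have hId1 : cdim T W (k+1) = cdim (T.erase x) (Wpi x W) (k+1) + cdim T (Wco x W T) k :=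
        cdim_decomp hx hWle k
      have hId2 : cdim T W (k+1+1) = cdim (T.erase x) (Wpi x W) (k+1+1) + cdim T (Wco x W T) (k+1) :=
        cdim_decomp hx hWle (k+1)
      set a := cdim (T.erase x) (Wpi x W) (k+1) with ha
      set b := cdim T (Wco x W T) k with hb
      set A2 := cdim (T.erase x) (Wpi x W) (k+1+1) with hA2
      set B2 := cdim T (Wco x W T) (k+1) with hB2
      -- induction hypotheses
      have houter := ihN (T.erase x) hcard (k+1) (Wpi x W) hWpile hWpisys
      have hinner := ih (Wco x W T) hWcole hWcosys
      -- trivial bound : B2 ≤ cdim T W (k+1)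
      have htriv : B2 ≤ cdim T W (k+1) :=
        cdim_mono_W hWle (W_le_Wco hx hWle hWsys) (k+1) (hWcole (k+1))
      constructor
      · -- P1
        intro hck
        by_cases ha0 : a = 0
        · have hA20 : A2 = 0 := by
            rw [hA2]
            exact cdim_zero_prop hWpile hWpisys (by rw [← ha]; exact ha0)
          omega
        · have hble : b ≤ k := by omega
          have hB2le : B2 ≤ b := hinner.1 hble
          have hA2le : A2 ≤ a := (houter.1 (by omega))
          omega
      · -- S1
        intro hck hk1
        by_cases ha1 : a ≤ 1
        · have hA2le : A2 ≤ a := houter.1 (by omega)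
          omega
        · by_cases ha2 : a ≤ k+1
          · have hk : 1 ≤ k := by omega
            have hble : b ≤ 2*k := by omega
            have hB2le : B2 ≤ b + 1 := hinner.2 hble hk
            have hA2le : A2 ≤ a := houter.1 (by omega)
            omega
          · have hble : b ≤ k := by omega
            have hB2le : B2 ≤ b := hinner.1 hble
            have hA2le : A2 ≤ a + 1 := houter.2 (by omega) (by omega)
            omega


lemma homogeneousSubmodule_eq_degSet (j : ℕ) :
    homogeneousSubmodule (Fin (n+1)) ℂ j = degSet (n := n) Finset.univ j := by
  ext p
  rw [mem_homogeneousSubmodule, mem_degSet]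
  constructor
  · intro h d hd
    refine ⟨by simp, ?_⟩
    rw [Finsupp.degree_eq_weight_one]
    exact h (MvPolynomial.mem_support_iff.mp hd)
  · intro h d hd
    have := (h d (MvPolynomial.mem_support_iff.mpr hd)).2
    rw [Finsupp.degree_eq_weight_one] at this
    exact this

lemma degSet_univ_zero :
    degSet (n := n) Finset.univ 0 = Submodule.span ℂ {(1 : MvPolynomial (Fin (n+1)) ℂ)} := by
  apply le_antisymm
  · intro p hp
    rw [mem_degSet] at hp
    have hs : ∀ m ∈ p.support, m = (0 : Fin (n+1) →₀ ℕ) := by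
      intro m hm
      exact (Finsupp.degree_eq_zero_iff m).mp (hp m hm).2
    have hp1 : p = (coeff 0 p) • (1 : MvPolynomial (Fin (n+1)) ℂ) := by
      apply MvPolynomial.ext
      intro m
      by_cases hm : m = 0
      · subst hm; simp [coeff_smul, coeff_one]
      · have h1 : coeff m p = 0 := by
          by_contra h
          exact hm (hs m (MvPolynomial.mem_support_iff.mpr h))
        simp [h1, coeff_smul, coeff_one, Ne.symm hm]
    rw [hp1]
    exact Submodule.smul_mem _ _ (Submodule.mem_span_singleton_self 1)
  · rw [Submodule.span_le, Set.singleton_subset_iff]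
    have : (1 : MvPolynomial (Fin (n+1)) ℂ) = monomial 0 1 := by
      rw [monomial_zero']; simp
    rw [SetLike.mem_coe, this]
    exact monomial_mem_degSet (by simp) (map_zero Finsupp.degree)

lemma finrank_degSet_univ_zero : finrank ℂ (degSet (n := n) Finset.univ 0) = 1 := by
  rw [degSet_univ_zero]
  exact finrank_span_singleton one_ne_zero


end SumHilbertAux

namespace SumHilbertAux

variable {n : ℕ}

lemma sum_odds (d : ℕ) : ∑ k ∈ Finset.range d, (2*k+1) = d^2 := by
  induction d with
  | zero => simp
  | succ d ih =>
    rw [Finset.sum_range_succ, ih]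
    ring

end SumHilbertAux

section Final

open SumHilbertAux Module

variable {n : ℕ} (I : Ideal (MvPolynomial (Fin (n + 1)) ℂ))

/-- the graded system attached to the ideal -/
noncomputable def idealW (j : ℕ) : Submodule ℂ (MvPolynomial (Fin (n + 1)) ℂ) :=
  Submodule.restrictScalars ℂ I ⊓ homogeneousSubmodule (Fin (n + 1)) ℂ j

lemma idealW_le (j : ℕ) : idealW I j ≤ degSet (n := n) Finset.univ j := by
  rw [← homogeneousSubmodule_eq_degSet]
  exact inf_le_right

lemma idealW_sys : ∀ i ∈ (Finset.univ : Finset (Fin (n+1))), ∀ j,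
    ∀ f ∈ idealW I j, X i * f ∈ idealW I (j+1) := by
  intro i _ j f hf
  rw [idealW, Submodule.mem_inf] at hf
  obtain ⟨hf1, hf2⟩ := hf
  rw [idealW, Submodule.mem_inf]
  constructor
  · exact Ideal.mul_mem_left I (X i) hf1
  · rw [mem_homogeneousSubmodule] at hf2 ⊢
    have := (isHomogeneous_X ℂ i).mul hf2
    rwa [Nat.add_comm 1 j] at this

lemma hilbertFn_eq_cdim (j : ℕ) :
    hilbertFn I j = cdim Finset.univ (idealW I) j := by
  unfold hilbertFn cdim idealW
  rw [homogeneousSubmodule_eq_degSet]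

lemma hilbertFn_zero (hproper : I ≠ ⊤) : hilbertFn I 0 = 1 := by
  unfold hilbertFn
  have h2 : (Submodule.restrictScalars ℂ I ⊓ homogeneousSubmodule (Fin (n+1)) ℂ 0) = ⊥ := by
    rw [eq_bot_iff]
    intro p hp
    rw [Submodule.mem_inf] at hp
    obtain ⟨hp1, hp2⟩ := hp
    simp only [Submodule.mem_bot]
    by_contra hne
    have hp0 : p ∈ degSet (n := n) Finset.univ 0 := by
      rw [← homogeneousSubmodule_eq_degSet]; exact hp2
    rw [degSet_univ_zero, Submodule.mem_span_singleton] at hp0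
    obtain ⟨c, rfl⟩ := hp0
    have hc : c ≠ 0 := by rintro rfl; simp at hne
    have hCc : (C c : MvPolynomial (Fin (n+1)) ℂ) ∈ I := by
      have : (C c : MvPolynomial (Fin (n+1)) ℂ) = c • 1 := by
        rw [smul_eq_C_mul, mul_one]
      rw [this]; exact hp1
    have hone : (1 : MvPolynomial (Fin (n+1)) ℂ) ∈ I := by
      have := Ideal.mul_mem_left I (C c⁻¹) hCc
      rwa [← C_mul, inv_mul_cancel₀ hc, C_1] at this
    exact hproper ((Ideal.eq_top_iff_one I).mpr hone)
  rw [h2, homogeneousSubmodule_eq_degSet, finrank_degSet_univ_zero]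
  simp [finrank_bot]

lemma hilbertFn_S1 {k : ℕ} (hk : 1 ≤ k) (h : hilbertFn I k ≤ 2*k) :
    hilbertFn I (k+1) ≤ hilbertFn I k + 1 := by
  rw [hilbertFn_eq_cdim] at h ⊢
  rw [hilbertFn_eq_cdim]
  exact (key (Finset.univ.card) Finset.univ le_rfl k (idealW I)
    (idealW_le I) (idealW_sys I)).2 h hk

end Final

/-- If `d ≥ 4` and `I` is a proper homogeneous ideal of `ℂ[x_0,…,x_n]` whose
Hilbert function satisfies the Gorenstein symmetry `h_I(k) = h_I(3d-5-k)` for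
`0 ≤ k ≤ 3d-5` and `h_I(d-1) ≥ 2d-1`, then `∑_{k=0}^{3d-5} h_I(k) > 3(d-1)²`. -/
theorem sum_hilbert_fn_gt_of_symmetric (n d : ℕ) (hd : 4 ≤ d)
    (I : Ideal (MvPolynomial (Fin (n + 1)) ℂ)) (hI : IsHomogeneousIdeal I)
    (hproper : I ≠ ⊤)
    (hsym : ∀ k : ℕ, k ≤ 3 * d - 5 → hilbertFn I k = hilbertFn I (3 * d - 5 - k))
    (hbig : hilbertFn I (d - 1) ≥ 2 * d - 1) :
    ∑ k ∈ Finset.range (3 * d - 4), hilbertFn I k > 3 * (d - 1) ^ 2 := by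
  have h0 : hilbertFn I 0 = 1 := hilbertFn_zero I hproper
  have hS1 : ∀ k, 1 ≤ k → hilbertFn I k ≤ 2*k → hilbertFn I (k+1) ≤ hilbertFn I k + 1 :=
    fun k hk h => hilbertFn_S1 I hk h
  -- chains
  have chain : ∀ m t, 1 ≤ m → hilbertFn I m ≤ 2*m → hilbertFn I (m+t) ≤ 2*(m+t) := by
    intro m t hm hc
    induction t with
    | zero => simpa using hc
    | succ t ih =>
      have h1 : hilbertFn I (m+t+1) ≤ hilbertFn I (m+t) + 1 := hS1 (m+t) (by omega) ih
      show hilbertFn I (m+t+1) ≤ 2*(m+t+1)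
      omega
  have chainA : ∀ m, 1 ≤ m → m ≤ d-1 → 2*m+1 ≤ hilbertFn I m := by
    intro m h1 h2
    by_contra h
    push_neg at h
    have h3 := chain m (d-1-m) h1 (by omega)
    have he : m + (d-1-m) = d-1 := by omega
    rw [he] at h3
    omega
  have chain2 : ∀ k t, d ≤ k → hilbertFn I k ≤ k+2 → hilbertFn I (k+t) ≤ k+2+t := by
    intro k t hk hc
    induction t with
    | zero => simpa using hc
    | succ t ih =>
      have h1 : hilbertFn I (k+t+1) ≤ hilbertFn I (k+t) + 1 :=
        hS1 (k+t) (by omega) (by omega)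
      show hilbertFn I (k+t+1) ≤ k+2+(t+1)
      omega
  have chainB : ∀ k, d ≤ k → k ≤ 2*d-5 → k+3 ≤ hilbertFn I k := by
    intro k hk1 hk2
    by_contra h
    push_neg at h
    have h2 := chain2 k (2*d-4-k) hk1 (by omega)
    have he : k + (2*d-4-k) = 2*d-4 := by omega
    rw [he] at h2
    have hsy := hsym (d-1) (by omega)
    have he2 : 3*d-5-(d-1) = 2*d-4 := by omega
    rw [he2] at hsy
    omega
  -- sums
  have hsum1 : d^2 ≤ ∑ k ∈ Finset.range d, hilbertFn I k := by
    rw [← SumHilbertAux.sum_odds d]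
    apply Finset.sum_le_sum
    intro k hk
    rw [Finset.mem_range] at hk
    rcases Nat.eq_zero_or_pos k with rfl | hpos
    · simp [h0]
    · exact chainA k hpos (by omega)
  have hsum2 : (d-4)*(d+3) ≤ ∑ k ∈ Finset.Ico d (2*d-4), hilbertFn I k := by
    have hcard : (Finset.Ico d (2*d-4)).card = d-4 := by rw [Nat.card_Ico]; omega
    calc (d-4)*(d+3) = (Finset.Ico d (2*d-4)).card • (d+3) := by
          rw [hcard]; simp [smul_eq_mul]
    _ ≤ ∑ k ∈ Finset.Ico d (2*d-4), hilbertFn I k := by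
          apply Finset.card_nsmul_le_sum
          intro k hk
          rw [Finset.mem_Ico] at hk
          have := chainB k hk.1 (by omega)
          omega
  have hsum3 : ∑ k ∈ Finset.Ico (2*d-4) (3*d-4), hilbertFn I k
      = ∑ k ∈ Finset.range d, hilbertFn I k := by
    rw [Finset.sum_Ico_eq_sum_range]
    have hlen : 3*d-4 - (2*d-4) = d := by omega
    rw [hlen, ← Finset.sum_range_reflect]
    apply Finset.sum_congr rfl
    intro j hj
    rw [Finset.mem_range] at hj
    have h1 : 2*d-4 + (d-1-j) = 3*d-5-j := by omega
    rw [h1]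
    exact (hsym j (by omega)).symm
  have hsplit : ∑ k ∈ Finset.range (3*d-4), hilbertFn I k
      = (∑ k ∈ Finset.range d, hilbertFn I k + ∑ k ∈ Finset.Ico d (2*d-4), hilbertFn I k)
        + ∑ k ∈ Finset.Ico (2*d-4) (3*d-4), hilbertFn I k := by
    rw [Finset.range_eq_Ico,
      ← Finset.sum_Ico_consecutive _ (by omega : (0:ℕ) ≤ 2*d-4) (by omega : 2*d-4 ≤ 3*d-4),
      ← Finset.sum_Ico_consecutive _ (by omega : (0:ℕ) ≤ d) (by omega : d ≤ 2*d-4),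
      ← Finset.range_eq_Ico]
  obtain ⟨f, rfl⟩ : ∃ f, d = f + 4 := ⟨d - 4, by omega⟩
  have e1 : f + 4 - 1 = f + 3 := by omega
  have e2 : f + 4 - 4 = f := by omega
  have e3 : f + 4 + 3 = f + 7 := by omega
  rw [hsplit, hsum3, e1]
  rw [e2, e3] at hsum2
  nlinarith [hsum1, hsum2]
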